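/- Let V be a ℚ-vector space with a linear action of SL₂(ℤ) such that (u-1)² = 0 and the central involution i = w² acts as the identity on V. Then the action of SL₂(ℤ) on V is trivial. -/

import Mathlib

open Matrix

def u : Matrix.SpecialLinearGroup (Fin 2) ℤ :=
  ⟨!![1, 1; 0, 1], by simp [Matrix.det_fin_two_of]⟩

def w : Matrix.SpecialLinearGroup (Fin 2) ℤ :=
  ⟨!![0, 1; -1, 0], by simp [Matrix.det_fin_two_of]⟩

lemma u_eq_T : u = ModularGroup.T := by ext i j; fin_cases i <;> fin_cases j <;> rfl

lemma u_coe_zpow (n : ℤ) : ((u ^ n : Matrix.SpecialLinearGroup (Fin 2) ℤ) : Matrix (Fin 2) (Fin 2) ℤ) = !![1, n; 0, 1] := by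
  rw [u_eq_T]; exact ModularGroup.coe_T_zpow n

lemma mem_closure_uw (g : Matrix.SpecialLinearGroup (Fin 2) ℤ) :
    g ∈ Subgroup.closure {u, w} := by
  have hu : u ∈ Subgroup.closure {u, w} := Subgroup.subset_closure (Or.inl rfl)
  have hw : w ∈ Subgroup.closure {u, w} := Subgroup.subset_closure (Or.inr rfl)
  suffices H : ∀ n : ℕ, ∀ g : Matrix.SpecialLinearGroup (Fin 2) ℤ,
      ((g : Matrix (Fin 2) (Fin 2) ℤ) 1 0).natAbs = n → g ∈ Subgroup.closure {u, w} from
    H _ g rfl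
  intro n
  induction n using Nat.strong_induction_on with
  | _ n ih =>
    intro g hg
    by_cases hc : (g : Matrix (Fin 2) (Fin 2) ℤ) 1 0 = 0
    · -- triangular case
      have hdet : (g : Matrix (Fin 2) (Fin 2) ℤ).det = 1 := g.2
      rw [Matrix.det_fin_two, hc, mul_zero, sub_zero] at hdet
      set b := (g : Matrix (Fin 2) (Fin 2) ℤ) 0 1 with hb
      rcases Int.mul_eq_one_iff_eq_one_or_neg_one.mp hdet with ⟨ha, hd⟩ | ⟨ha, hd⟩
      · have hmat : (g : Matrix (Fin 2) (Fin 2) ℤ) = !![1, b; 0, 1] := by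
          conv_lhs => rw [Matrix.eta_fin_two (g : Matrix (Fin 2) (Fin 2) ℤ)]
          rw [ha, hc, hd]
        have : g = u ^ b := Subtype.ext (by rw [u_coe_zpow, hmat])
        rw [this]; exact zpow_mem hu _
      · have hmat : (g : Matrix (Fin 2) (Fin 2) ℤ) = !![-1, b; 0, -1] := by
          conv_lhs => rw [Matrix.eta_fin_two (g : Matrix (Fin 2) (Fin 2) ℤ)]
          rw [ha, hc, hd]
        have : g = w ^ 2 * u ^ (-b) := by
          apply Subtype.ext
          rw [Matrix.SpecialLinearGroup.coe_mul, u_coe_zpow, pow_two,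
            Matrix.SpecialLinearGroup.coe_mul, hmat]
          show _ = !![0, 1; -1, 0] * !![0, 1; -1, 0] * !![1, -b; 0, 1]
          simp [Matrix.mul_fin_two]
        rw [this]
        exact mul_mem (pow_mem hw 2) (zpow_mem hu _)
    · -- Euclidean step
      set a := (g : Matrix (Fin 2) (Fin 2) ℤ) 0 0 with ha
      set c := (g : Matrix (Fin 2) (Fin 2) ℤ) 1 0 with hcc
      set q : ℤ := -(a / c) with hq
      set h := w * u ^ q * g with hh
      have hentry : (h : Matrix (Fin 2) (Fin 2) ℤ) 1 0 = -(a % c) := by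
        rw [hh, Matrix.SpecialLinearGroup.coe_mul, Matrix.SpecialLinearGroup.coe_mul,
          u_coe_zpow]
        simp [w, Matrix.mul_apply, Fin.sum_univ_two, ← ha, ← hcc]
        rw [Int.emod_def]; ring
      have hlt : ((h : Matrix (Fin 2) (Fin 2) ℤ) 1 0).natAbs < n := by
        rw [hentry, ← hg]
        have h1 := Int.emod_nonneg a hc
        have h2 := Int.emod_lt a hc
        omega
      have hmem := ih _ hlt h rfl
      have : g = (u ^ q)⁻¹ * w⁻¹ * h := by rw [hh]; group
      rw [this]
      exact mul_mem (mul_mem (inv_mem (zpow_mem hu q)) (inv_mem hw)) hmem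

lemma wu_cube : (w * u) ^ 3 = 1 := by
  ext i j
  fin_cases i <;> fin_cases j <;>
    rfl

lemma smul_cancel {V : Type*} [AddCommGroup V] [Module ℚ V] {q : ℚ}
    (hq : q ≠ 0) {x : V →ₗ[ℚ] V} (h : q • x = 0) : x = 0 := by
  have : q⁻¹ • (q • x) = q⁻¹ • (0 : V →ₗ[ℚ] V) := by rw [h]
  rwa [smul_smul, inv_mul_cancel₀ hq, one_smul, smul_zero] at this

lemma two_cancel {V : Type*} [AddCommGroup V] [Module ℚ V]
    {x : V →ₗ[ℚ] V} (h : x + x = 0) : x = 0 := by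
  refine smul_cancel (q := 2) (by norm_num) ?_
  rw [two_smul]; exact h

theorem main_alg
    (V : Type*) [AddCommGroup V] [Module ℚ V]
    (ρ : Representation ℚ (Matrix.SpecialLinearGroup (Fin 2) ℤ) V)
    (hquad : (ρ u - 1) ^ 2 = 0)
    (hi : ρ (w ^ 2) = 1) :
    ρ u = 1 ∧ ρ w = 1 := by
  set A := ρ u with hA
  set B := ρ w with hB'
  set N := A - 1 with hNdef
  have hA1 : A = 1 + N := by rw [hNdef]; noncomm_ring
  have hN : N * N = 0 := by rw [hNdef, ← sq]; exact hquad
  have hB : B * B = 1 := by rw [hB', ← _root_.map_mul, ← pow_two]; exact hi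
  have h3 : B * A * B * A * B * A = 1 := by
    have h : ρ ((w * u) ^ 3) = 1 := by rw [wu_cube, _root_.map_one]
    rw [map_pow, _root_.map_mul] at h
    calc B * A * B * A * B * A = (B * A) ^ 3 := by noncomm_ring
    _ = 1 := h
  have h5 : A * B * A * B * A = B := by
    calc A * B * A * B * A = (B * B) * (A * B * A * B * A) := by rw [hB, one_mul]
    _ = B * (B * A * B * A * B * A) := by noncomm_ring
    _ = B := by rw [h3, mul_one]
  set P := B * N * B with hPdef
  have hBAB : B * A * B = 1 + P := by rw [hA1, hPdef]; noncomm_ring [hB]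
  have hkey : (1 + N) * (1 + P) * (1 + N) = B := by
    calc (1 + N) * (1 + P) * (1 + N) = A * (B * A * B) * A := by rw [hBAB, hA1]
    _ = A * B * A * B * A := by noncomm_ring
    _ = B := h5
  have hP2 : P * P = 0 := by
    calc P * P = B * N * (B * B) * N * B := by rw [hPdef]; noncomm_ring
    _ = B * (N * N) * B := by rw [hB]; noncomm_ring
    _ = 0 := by rw [hN]; noncomm_ring
  have hinv : B * ((1 - N) * (1 - P) * (1 - N)) = 1 := by
    rw [← hkey]
    calc (1 + N) * (1 + P) * (1 + N) * ((1 - N) * (1 - P) * (1 - N))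
        = (1 + N) * (1 + P) * (1 - N * N) * (1 - P) * (1 - N) := by noncomm_ring
    _ = (1 + N) * ((1 + P) * (1 - P)) * (1 - N) := by rw [hN]; noncomm_ring
    _ = (1 + N) * (1 - P * P) * (1 - N) := by noncomm_ring
    _ = (1 + N) * (1 - N) := by rw [hP2]; noncomm_ring
    _ = 1 - N * N := by noncomm_ring
    _ = 1 := by rw [hN]; noncomm_ring
  have hkey2 : (1 + N) * (1 + P) * (1 + N) = (1 - N) * (1 - P) * (1 - N) := by
    rw [hkey]
    calc B = B * 1 := by rw [mul_one]
    _ = B * (B * ((1 - N) * (1 - P) * (1 - N))) := by rw [hinv]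
    _ = (B * B) * ((1 - N) * (1 - P) * (1 - N)) := by noncomm_ring
    _ = (1 - N) * (1 - P) * (1 - N) := by rw [hB, one_mul]
  have hsum : 4 * N + 2 * P + 2 * (N * P * N) = 0 := by
    have e : (1 + N) * (1 + P) * (1 + N) - (1 - N) * (1 - P) * (1 - N)
        = 4 * N + 2 * P + 2 * (N * P * N) := by noncomm_ring
    rw [← e, hkey2, sub_self]
  have hNP : N * P = 0 := by
    have h : N * (4 * N + 2 * P + 2 * (N * P * N)) = 0 := by rw [hsum, mul_zero]
    have e : N * (4 * N + 2 * P + 2 * (N * P * N))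
        = 4 * (N * N) + (N * P + N * P) + 2 * ((N * N) * (P * N)) := by noncomm_ring
    rw [e, hN] at h
    apply two_cancel
    calc N * P + N * P = 4 * 0 + (N * P + N * P) + 2 * (0 * (P * N)) := by noncomm_ring
    _ = 0 := h
  have hPN : P * N = 0 := by
    have h : (4 * N + 2 * P + 2 * (N * P * N)) * N = 0 := by rw [hsum, zero_mul]
    have e : (4 * N + 2 * P + 2 * (N * P * N)) * N
        = 4 * (N * N) + (P * N + P * N) + 2 * ((N * P) * (N * N)) := by noncomm_ring
    rw [e, hN] at h
    apply two_cancel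
    calc P * N + P * N = 4 * 0 + (P * N + P * N) + 2 * ((N * P) * 0) := by noncomm_ring
    _ = 0 := h
  have hPval : P = -(2 * N) := by
    have h : 4 * N + 2 * P = 0 := by
      have : N * P * N = 0 := by rw [hNP, zero_mul]
      calc 4 * N + 2 * P = 4 * N + 2 * P + 2 * (N * P * N) - 2 * (N * P * N) := by
            noncomm_ring
      _ = 0 := by rw [hsum, this]; noncomm_ring
    have h2 : (2 * N + P) + (2 * N + P) = 0 := by
      calc (2 * N + P) + (2 * N + P) = 4 * N + 2 * P := by noncomm_ring
      _ = 0 := h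
    have := two_cancel h2
    linear_combination (norm := noncomm_ring) this
  have hBone : B = 1 := by
    rw [← hkey, hPval]
    calc (1 + N) * (1 + -(2 * N)) * (1 + N)
        = 1 - 3 * (N * N) - 2 * (N * (N * N)) := by noncomm_ring
    _ = 1 := by rw [hN]; noncomm_ring
  have hPN' : P = N := by rw [hPdef, hBone, one_mul, mul_one]
  have hNzero : N = 0 := by
    have h3 : (3 : ℚ) • N = 0 := by
      have : N + (N + N) = 0 := by
        calc N + (N + N) = N - -(2 * N) := by noncomm_ring
        _ = N - P := by rw [hPval]
        _ = N - N := by rw [hPN']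
        _ = 0 := sub_self N
      calc (3 : ℚ) • N = N + (N + N) := by
            rw [show (3 : ℚ) = 1 + 2 by norm_num, add_smul, one_smul, two_smul]
      _ = 0 := this
    exact smul_cancel (by norm_num) h3
  constructor
  · rw [hA1, hNzero, add_zero]
  · exact hBone

/-- If `(u-1)² = 0` and `i = w²` acts trivially, then the action of `SL₂(ℤ)` is trivial. -/
theorem quadratic_plus_trivial
    (V : Type*) [AddCommGroup V] [Module ℚ V]
    (ρ : Representation ℚ (Matrix.SpecialLinearGroup (Fin 2) ℤ) V)
    (hquad : (ρ u - 1) ^ 2 = 0)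
    (hi : ρ (w ^ 2) = 1) :
    ∀ g : Matrix.SpecialLinearGroup (Fin 2) ℤ, ρ g = 1 := by
  obtain ⟨hu1, hw1⟩ := main_alg V ρ hquad hi
  intro g
  have hmem := mem_closure_uw g
  induction hmem using Subgroup.closure_induction with
  | mem x hx => rcases hx with h | h <;> rw [h] <;> assumption
  | one => exact _root_.map_one ρ
  | mul x y _ _ hx hy => rw [_root_.map_mul, hx, hy, one_mul]
  | inv x _ hx =>
      have : ρ x⁻¹ * ρ x = 1 := by rw [← _root_.map_mul, inv_mul_cancel, _root_.map_one]
      rwa [hx, mul_one] at this
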